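/- Let H be a real Hilbert space with a Hilbert basis (orthonormal basis) (hᵢ)_{i∈ℕ}, let (μᵢ)_{i∈ℕ} be positive reals, let v⁰ ∈ H, let T > 0, and let f : [0,T] → H be continuous. Then for every t ∈ [0,T] the sequence i ↦ (sin(μᵢt)/μᵢ)·⟪v⁰,hᵢ⟫ + ∫₀ᵗ (sin(μᵢ(t−s))/μᵢ)·⟪f(s),hᵢ⟫ ds is square-summable, so the series u(t) = ∑ᵢ [ (sin(μᵢt)/μᵢ)·⟪v⁰,hᵢ⟫ + ∫₀ᵗ (sin(μᵢ(t−s))/μᵢ)·⟪f(s),hᵢ⟫ ds ]·hᵢ converges in H, and it satisfies ‖u(t)‖ ≤ t·‖v⁰‖ + ∫₀ᵗ (t−s)·‖f(s)‖ ds. -/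

import Mathlib

open scoped RealInnerProductSpace

open MeasureTheory
open scoped ENNReal

namespace Stmt14Aux

lemma abs_sin_sub_sin (a b : ℝ) : |Real.sin a - Real.sin b| ≤ |a - b| := by
  rw [Real.sin_sub_sin]
  calc |2 * Real.sin ((a - b) / 2) * Real.cos ((a + b) / 2)|
      = 2 * |Real.sin ((a - b) / 2)| * |Real.cos ((a + b) / 2)| := by
        rw [abs_mul, abs_mul]; norm_num
    _ ≤ 2 * |(a - b) / 2| * 1 := by
        have h1 : |Real.sin ((a - b) / 2)| ≤ |(a - b) / 2| := Real.abs_sin_le_abs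
        have h2 : |Real.cos ((a + b) / 2)| ≤ 1 := Real.abs_cos_le_one _
        nlinarith [abs_nonneg (Real.sin ((a - b) / 2)), abs_nonneg ((a - b) / 2),
          abs_nonneg (Real.cos ((a + b) / 2))]
    _ = |a - b| := by rw [abs_div, abs_two]; ring

lemma lp_norm_le (c d : lp (fun _ : ℕ => ℝ) 2) (hcd : ∀ i, |c i| ≤ |d i|) :
    ‖c‖ ≤ ‖d‖ := by
  have h2 : (0:ℝ) < (2 : ℝ≥0∞).toReal := by norm_num
  have hc := lp.norm_rpow_eq_tsum h2 c
  have hd := lp.norm_rpow_eq_tsum h2 d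
  have hle : ‖c‖ ^ (2 : ℝ≥0∞).toReal ≤ ‖d‖ ^ (2 : ℝ≥0∞).toReal := by
    rw [hc, hd]
    refine Summable.tsum_le_tsum (fun i => ?_) ((lp.memℓp c).summable h2) ((lp.memℓp d).summable h2)
    have := hcd i
    simp only [Real.norm_eq_abs]
    exact Real.rpow_le_rpow (abs_nonneg _) this (by norm_num)
  have h2' : (2 : ℝ≥0∞).toReal = ((2:ℕ):ℝ) := by norm_num
  rw [h2', Real.rpow_natCast, Real.rpow_natCast] at hle
  exact le_of_pow_le_pow_left₀ two_ne_zero (norm_nonneg d) hle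

variable {H : Type*} [NormedAddCommGroup H] [InnerProductSpace ℝ H] [CompleteSpace H]
variable (h : HilbertBasis ℕ ℝ H) (μ : ℕ → ℝ)

lemma coef_mem (hμ : ∀ i, 0 < μ i) (r : ℝ) (x : H) :
    Memℓp (fun i => Real.sin (μ i * r) / μ i * h.repr x i) 2 := by
  apply memℓp_gen
  have h2 : (0:ℝ) < (2 : ℝ≥0∞).toReal := by norm_num
  have hx : Summable fun i => (|r| * ‖h.repr x i‖) ^ (2 : ℝ≥0∞).toReal := by
    have := (lp.memℓp (h.repr x)).summable h2
    have h2' : (2 : ℝ≥0∞).toReal = ((2:ℕ):ℝ) := by norm_num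
    simp only [h2', Real.rpow_natCast, mul_pow] at this ⊢
    exact this.mul_left _
  refine Summable.of_nonneg_of_le (fun i => ?_) (fun i => ?_) hx
  · positivity
  · apply Real.rpow_le_rpow (norm_nonneg _) _ h2.le
    rw [Real.norm_eq_abs, abs_mul, abs_div]
    rw [abs_of_pos (hμ i)]
    calc |Real.sin (μ i * r)| / μ i * |h.repr x i|
        ≤ |μ i * r| / μ i * |h.repr x i| := by
          have hs : |Real.sin (μ i * r)| ≤ |μ i * r| := Real.abs_sin_le_abs
          gcongr
          exact (hμ i).le
      _ = |r| * ‖h.repr x i‖ := by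
          rw [abs_mul, abs_of_pos (hμ i), Real.norm_eq_abs,
            mul_comm (μ i) |r|, mul_div_assoc, div_self (hμ i).ne', mul_one]

variable (hμ : ∀ i, 0 < μ i)

noncomputable def S (r : ℝ) (x : H) : H :=
  h.repr.symm ⟨fun i => Real.sin (μ i * r) / μ i * h.repr x i, coef_mem h μ hμ r x⟩

lemma repr_S (r : ℝ) (x : H) (i : ℕ) :
    h.repr (S h μ hμ r x) i = Real.sin (μ i * r) / μ i * h.repr x i := by
  simp only [S, LinearIsometryEquiv.apply_symm_apply]

lemma inner_S (r : ℝ) (x : H) (i : ℕ) :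
    ⟪h i, S h μ hμ r x⟫ = Real.sin (μ i * r) / μ i * ⟪h i, x⟫ := by
  rw [← h.repr_apply_apply, ← h.repr_apply_apply, repr_S]

lemma S_sub_norm (r r' : ℝ) (x : H) :
    ‖S h μ hμ r x - S h μ hμ r' x‖ ≤ |r - r'| * ‖x‖ := by
  have key : S h μ hμ r x - S h μ hμ r' x
      = h.repr.symm (⟨_, coef_mem h μ hμ r x⟩ - ⟨_, coef_mem h μ hμ r' x⟩) := by
    simp [S, map_sub]
  rw [key, LinearIsometryEquiv.norm_map]
  have hx : ‖x‖ = ‖h.repr x‖ := (LinearIsometryEquiv.norm_map h.repr x).symm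
  have hsmul : |r - r'| * ‖x‖ = ‖(|r - r'|) • h.repr x‖ := by
    rw [norm_smul, hx, Real.norm_eq_abs, abs_abs]
  rw [hsmul]
  apply lp_norm_le
  intro i
  have hc : ((⟨_, coef_mem h μ hμ r x⟩ - ⟨_, coef_mem h μ hμ r' x⟩ :
      lp (fun _ : ℕ => ℝ) 2)) i
      = Real.sin (μ i * r) / μ i * h.repr x i
        - Real.sin (μ i * r') / μ i * h.repr x i := rfl
  rw [hc]
  have hs : ((|r - r'|) • h.repr x) i = |r - r'| * h.repr x i := rfl
  rw [hs, ← sub_mul, abs_mul, abs_mul, abs_abs]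
  refine mul_le_mul_of_nonneg_right ?_ (abs_nonneg _)
  rw [div_sub_div_same, abs_div, abs_of_pos (hμ i), div_le_iff₀ (hμ i)]
  calc |Real.sin (μ i * r) - Real.sin (μ i * r')| ≤ |μ i * r - μ i * r'| :=
        abs_sin_sub_sin _ _
    _ = |r - r'| * μ i := by
        rw [← mul_sub, abs_mul, abs_of_pos (hμ i)]; ring

lemma S_norm (r : ℝ) (x : H) : ‖S h μ hμ r x‖ ≤ |r| * ‖x‖ := by
  rw [S, LinearIsometryEquiv.norm_map]
  have hx : ‖x‖ = ‖h.repr x‖ := (LinearIsometryEquiv.norm_map h.repr x).symm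
  have hsmul : |r| * ‖x‖ = ‖(|r|) • h.repr x‖ := by
    rw [norm_smul, hx, Real.norm_eq_abs, abs_abs]
  rw [hsmul]
  apply lp_norm_le
  intro i
  have hc : ((⟨fun i => Real.sin (μ i * r) / μ i * h.repr x i,
      coef_mem h μ hμ r x⟩ : lp (fun _ : ℕ => ℝ) 2)) i
      = Real.sin (μ i * r) / μ i * h.repr x i := rfl
  have hs : ((|r|) • h.repr x) i = |r| * h.repr x i := rfl
  rw [hc, hs, abs_mul, abs_mul, abs_abs]
  refine mul_le_mul_of_nonneg_right ?_ (abs_nonneg _)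
  rw [abs_div, abs_of_pos (hμ i), div_le_iff₀ (hμ i)]
  calc |Real.sin (μ i * r)| ≤ |μ i * r| := Real.abs_sin_le_abs
    _ = |r| * μ i := by rw [abs_mul, abs_of_pos (hμ i)]; ring

end Stmt14Aux

namespace Stmt14Aux

variable {H : Type*} [NormedAddCommGroup H] [InnerProductSpace ℝ H] [CompleteSpace H]
variable (h : HilbertBasis ℕ ℝ H) (μ : ℕ → ℝ) (hμ : ∀ i, 0 < μ i)

lemma S_sub_arg (r : ℝ) (x y : H) :
    S h μ hμ r x - S h μ hμ r y = S h μ hμ r (x - y) := by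
  apply h.repr.injective
  rw [map_sub]
  apply lp.ext
  funext i
  have h1 : (h.repr (S h μ hμ r x) - h.repr (S h μ hμ r y)) i
      = h.repr (S h μ hμ r x) i - h.repr (S h μ hμ r y) i := rfl
  rw [h1, repr_S, repr_S, repr_S, map_sub]
  have h2 : (h.repr x - h.repr y) i = h.repr x i - h.repr y i := rfl
  rw [h2]
  ring

attribute [irreducible] S

lemma S_continuous : Continuous (fun p : ℝ × H => S h μ hμ p.1 p.2) := by
  rw [continuous_iff_continuousAt]
  rintro ⟨r₀, x₀⟩
  have hg : Filter.Tendsto (fun p : ℝ × H => |p.1| * ‖p.2 - x₀‖ + |p.1 - r₀| * ‖x₀‖)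
      (nhds (r₀, x₀)) (nhds 0) := by
    have hc : Continuous (fun p : ℝ × H => |p.1| * ‖p.2 - x₀‖ + |p.1 - r₀| * ‖x₀‖) := by
      fun_prop
    have h0 := hc.tendsto (r₀, x₀)
    simpa using h0
  rw [ContinuousAt, tendsto_iff_dist_tendsto_zero]
  refine squeeze_zero (fun p => dist_nonneg) (fun p => ?_) hg
  calc dist (S h μ hμ p.1 p.2) (S h μ hμ r₀ x₀)
      ≤ dist (S h μ hμ p.1 p.2) (S h μ hμ p.1 x₀)
        + dist (S h μ hμ p.1 x₀) (S h μ hμ r₀ x₀) := dist_triangle _ _ _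
    _ ≤ |p.1| * ‖p.2 - x₀‖ + |p.1 - r₀| * ‖x₀‖ := by
        gcongr ?_ + ?_
        · rw [dist_eq_norm, S_sub_arg]
          exact S_norm h μ hμ _ _
        · rw [dist_eq_norm]
          exact S_sub_norm h μ hμ _ _ _

set_option maxHeartbeats 1000000 in
lemma S_contOn {A : Set ℝ} {f : ℝ → H} (hf : ContinuousOn f A) (t : ℝ) :
    ContinuousOn (fun s => S h μ hμ (t - s) (f s)) A := by
  have h1 : ContinuousOn (fun s => ((t - s, f s) : ℝ × H)) A :=
    (continuousOn_const.sub continuousOn_id).prodMk hf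
  exact (S_continuous h μ hμ).comp_continuousOn h1

end Stmt14Aux


open Stmt14Aux in
/-- Well-definedness of the memory-kernel representation: for a Hilbert basis
`(hᵢ)`, positive reals `(μᵢ)`, `v⁰ ∈ H` and continuous `f : [0,T] → H`, the
coefficients `(sin(μᵢt)/μᵢ)⟪v⁰,hᵢ⟫ + ∫₀ᵗ (sin(μᵢ(t−s))/μᵢ)⟪f(s),hᵢ⟫ ds` are
square-summable, the corresponding series converges in `H`, and its sum has
norm at most `t‖v⁰‖ + ∫₀ᵗ (t−s)‖f(s)‖ ds`. -/
theorem stmt14 {H : Type*} [NormedAddCommGroup H] [InnerProductSpace ℝ H]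
    [CompleteSpace H] (h : HilbertBasis ℕ ℝ H) (μ : ℕ → ℝ)
    (hμ : ∀ i, 0 < μ i) (v0 : H) (T : ℝ) (hT : 0 < T)
    (f : ℝ → H) (hf : ContinuousOn f (Set.Icc 0 T))
    (t : ℝ) (ht : t ∈ Set.Icc (0:ℝ) T) :
    Summable (fun i => (Real.sin (μ i * t) / μ i * ⟪v0, h i⟫
        + ∫ s in (0:ℝ)..t, Real.sin (μ i * (t - s)) / μ i * ⟪f s, h i⟫) ^ 2) ∧
    Summable (fun i => (Real.sin (μ i * t) / μ i * ⟪v0, h i⟫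
        + ∫ s in (0:ℝ)..t, Real.sin (μ i * (t - s)) / μ i * ⟪f s, h i⟫) • h i) ∧
    ‖∑' i, (Real.sin (μ i * t) / μ i * ⟪v0, h i⟫
        + ∫ s in (0:ℝ)..t, Real.sin (μ i * (t - s)) / μ i * ⟪f s, h i⟫) • h i‖
      ≤ t * ‖v0‖ + ∫ s in (0:ℝ)..t, (t - s) * ‖f s‖ := by
  obtain ⟨ht0, htT⟩ := ht
  have hsub : Set.Icc (0:ℝ) t ⊆ Set.Icc 0 T := Set.Icc_subset_Icc le_rfl htT
  set g : ℝ → H := fun s => S h μ hμ (t - s) (f s) with hg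
  have hgc : ContinuousOn g (Set.Icc 0 t) := S_contOn h μ hμ (hf.mono hsub) t
  have hgi : IntervalIntegrable g MeasureTheory.volume 0 t := by
    apply ContinuousOn.intervalIntegrable
    rwa [Set.uIcc_of_le ht0]
  set u : H := S h μ hμ t v0 + ∫ s in (0:ℝ)..t, g s with hu
  have key : ∀ i, Real.sin (μ i * t) / μ i * ⟪v0, h i⟫
      + (∫ s in (0:ℝ)..t, Real.sin (μ i * (t - s)) / μ i * ⟪f s, h i⟫) = h.repr u i := by
    intro i
    have h1 : h.repr u i = ⟪h i, u⟫ := h.repr_apply_apply u i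
    rw [h1, hu, inner_add_right, inner_S]
    have h2 : ⟪h i, ∫ s in (0:ℝ)..t, g s⟫
        = ∫ s in (0:ℝ)..t, ⟪h i, g s⟫ :=
      ((innerSL ℝ (h i)).intervalIntegral_comp_comm hgi).symm
    rw [h2]
    congr 1
    · rw [real_inner_comm]
    · apply intervalIntegral.integral_congr
      intro s _
      rw [hg]
      simp only []
      rw [inner_S, real_inner_comm]
  simp only [key]
  refine ⟨?_, ?_, ?_⟩
  · have h2 : (0:ℝ) < (2 : ENNReal).toReal := by norm_num
    have := (lp.memℓp (h.repr u)).summable h2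
    have h2' : (2 : ENNReal).toReal = ((2:ℕ):ℝ) := by norm_num
    simp only [h2', Real.rpow_natCast, Real.norm_eq_abs, sq_abs] at this
    exact this
  · exact (h.hasSum_repr u).summable
  · rw [(h.hasSum_repr u).tsum_eq, hu]
    have hb1 : ‖S h μ hμ t v0‖ ≤ t * ‖v0‖ := by
      have := S_norm h μ hμ t v0
      rwa [abs_of_nonneg ht0] at this
    have hb2 : ‖∫ s in (0:ℝ)..t, g s‖ ≤ ∫ s in (0:ℝ)..t, (t - s) * ‖f s‖ := by
      calc ‖∫ s in (0:ℝ)..t, g s‖ ≤ ∫ s in (0:ℝ)..t, ‖g s‖ :=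
            intervalIntegral.norm_integral_le_integral_norm ht0
        _ ≤ ∫ s in (0:ℝ)..t, (t - s) * ‖f s‖ := by
            apply intervalIntegral.integral_mono_on ht0
            · apply ContinuousOn.intervalIntegrable
              rw [Set.uIcc_of_le ht0]
              exact hgc.norm
            · apply ContinuousOn.intervalIntegrable
              rw [Set.uIcc_of_le ht0]
              exact ((continuousOn_const.sub continuousOn_id).mul (hf.mono hsub).norm)
            · intro s hs
              have := S_norm h μ hμ (t - s) (f s)
              rwa [abs_of_nonneg (by linarith [hs.2] : (0:ℝ) ≤ t - s)] at this
    calc ‖S h μ hμ t v0 + ∫ s in (0:ℝ)..t, g s‖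
        ≤ ‖S h μ hμ t v0‖ + ‖∫ s in (0:ℝ)..t, g s‖ := norm_add_le _ _
      _ ≤ t * ‖v0‖ + ∫ s in (0:ℝ)..t, (t - s) * ‖f s‖ := add_le_add hb1 hb2
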